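/- arXiv:1011.2933 — 2 statements merged into one kernel-verified Lean document; each statement's English description precedes it below -/
import Mathlib

section
/- Let T : V → V be a linear operator on a vector space V. Suppose there exists a finite-rank linear operator F : V → V such that I - (T - F) is bijective. Then I - T is injective if and only if I - T is surjective. -/
/-- Fredholm alternative for `1 - G` with `G` of finite rank. -/
lemma key_finrank {K V : Type*} [Field K] [AddCommGroup V] [Module K V]
    (G : V →ₗ[K] V) [FiniteDimensional K ↥(LinearMap.range G)] :
    Function.Injective ⇑((LinearMap.id : V →ₗ[K] V) - G) ↔
      Function.Surjective ⇑((LinearMap.id : V →ₗ[K] V) - G) := by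
  set W := LinearMap.range G with hW
  have hmem : ∀ x ∈ W, ((LinearMap.id : V →ₗ[K] V) - G) x ∈ W := by
    intro x hx
    simp only [LinearMap.sub_apply, LinearMap.id_apply]
    exact W.sub_mem hx (LinearMap.mem_range_self G x)
  set f : W →ₗ[K] W := ((LinearMap.id : V →ₗ[K] V) - G).restrict hmem with hf
  constructor
  · intro hinj y
    have hfin : Function.Injective f := by
      intro a b hab
      have : ((LinearMap.id : V →ₗ[K] V) - G) a = ((LinearMap.id : V →ₗ[K] V) - G) b := by
        have := congrArg (Subtype.val) hab
        simpa [hf, LinearMap.restrict_apply] using this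
      exact Subtype.ext (hinj this)
    have hfsurj : Function.Surjective f := (LinearMap.injective_iff_surjective).mp hfin
    obtain ⟨w, hw⟩ := hfsurj ⟨G y, LinearMap.mem_range_self G y⟩
    refine ⟨y + (w : V), ?_⟩
    have hw' : ((LinearMap.id : V →ₗ[K] V) - G) (w : V) = G y := by
      have := congrArg (Subtype.val) hw
      simpa [hf, LinearMap.restrict_apply] using this
    simp only [LinearMap.sub_apply, LinearMap.id_apply, map_add] at hw' ⊢
    rw [← hw']
    abel
  · intro hsurj
    have hfsurj : Function.Surjective f := by
      rintro ⟨w, hw⟩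
      obtain ⟨v, hv⟩ := hsurj w
      have hvW : v ∈ W := by
        have : v = w + G v := by
          have : v - G v = w := by simpa using hv
          rw [← this]; abel
        rw [this]
        exact W.add_mem hw (LinearMap.mem_range_self G v)
      exact ⟨⟨v, hvW⟩, Subtype.ext (by simpa [hf, LinearMap.restrict_apply] using hv)⟩
    have hfin : Function.Injective f := (LinearMap.injective_iff_surjective).mpr hfsurj
    rw [← LinearMap.ker_eq_bot, LinearMap.ker_eq_bot']
    intro x hx
    have hxW : x ∈ W := by
      have : x = G x := by
        have : x - G x = 0 := by simpa using hx
        exact sub_eq_zero.mp this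
      rw [this]; exact LinearMap.mem_range_self G x
    have : f ⟨x, hxW⟩ = 0 := Subtype.ext (by simpa [hf, LinearMap.restrict_apply] using hx)
    have := hfin (a₁ := ⟨x, hxW⟩) (a₂ := 0) (by simpa using this)
    simpa using congrArg Subtype.val this

theorem stmt_5 {K V : Type*} [Field K] [AddCommGroup V] [Module K V]
    (T F : V →ₗ[K] V) [FiniteDimensional K ↥(LinearMap.range F)]
    (h : Function.Bijective ⇑((LinearMap.id : V →ₗ[K] V) - (T - F))) :
    Function.Injective ⇑((LinearMap.id : V →ₗ[K] V) - T) ↔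
      Function.Surjective ⇑((LinearMap.id : V →ₗ[K] V) - T) := by
  set S := (LinearMap.id : V →ₗ[K] V) - (T - F) with hS
  let E : V ≃ₗ[K] V := LinearEquiv.ofBijective S h
  set G : V →ₗ[K] V := E.symm.toLinearMap ∘ₗ F with hG
  haveI : FiniteDimensional K ↥(LinearMap.range G) := by
    rw [hG, LinearMap.range_comp]
    infer_instance
  have hcomp : (LinearMap.id : V →ₗ[K] V) - T
      = E.toLinearMap ∘ₗ ((LinearMap.id : V →ₗ[K] V) - G) := by
    ext x
    have hE : ∀ v, E v = v - (T v - F v) := fun v => rfl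
    have hEsymm : E (E.symm (F x)) = F x := E.apply_symm_apply (F x)
    simp only [LinearMap.sub_apply, LinearMap.id_apply, LinearMap.comp_apply,
      LinearEquiv.coe_coe, hG, map_sub]
    rw [hEsymm, hE]
    abel
  have hinj : Function.Injective ⇑((LinearMap.id : V →ₗ[K] V) - T)
      ↔ Function.Injective ⇑((LinearMap.id : V →ₗ[K] V) - G) := by
    rw [hcomp]
    constructor
    · intro hi
      have : Function.Injective (⇑E ∘ ⇑((LinearMap.id : V →ₗ[K] V) - G)) := by
        simpa [LinearMap.coe_comp, LinearEquiv.coe_coe] using hi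
      exact Function.Injective.of_comp this
    · intro hi
      simpa [LinearMap.coe_comp, LinearEquiv.coe_coe] using E.injective.comp hi
  have hsurj : Function.Surjective ⇑((LinearMap.id : V →ₗ[K] V) - T)
      ↔ Function.Surjective ⇑((LinearMap.id : V →ₗ[K] V) - G) := by
    rw [hcomp]
    constructor
    · intro hs y
      obtain ⟨x, hx⟩ := hs (E y)
      exact ⟨x, E.injective (by simpa [LinearMap.coe_comp, LinearEquiv.coe_coe] using hx)⟩
    · intro hs
      simpa [LinearMap.coe_comp, LinearEquiv.coe_coe] using E.surjective.comp hs
  rw [hinj, hsurj]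
  exact key_finrank G
end

section
/- Let E be a Banach space, R : E → E a bijective bounded linear operator, and F : E → E a bounded finite-rank operator. Then R - F is injective if and only if R - F is surjective. -/
/-- Algebraic Fredholm alternative for `1 - T` with `T` of finite rank. -/
lemma aux_fredholm {𝕜 E : Type*} [Field 𝕜] [AddCommGroup E] [Module 𝕜 E]
    (T : E →ₗ[𝕜] E) [FiniteDimensional 𝕜 (LinearMap.range T)] :
    Function.Injective ⇑((LinearMap.id : E →ₗ[𝕜] E) - T) ↔
      Function.Surjective ⇑((LinearMap.id : E →ₗ[𝕜] E) - T) := by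
  set S : E →ₗ[𝕜] E := LinearMap.id - T with hS
  have hSapp : ∀ x : E, S x = x - T x := fun x => rfl
  set W := LinearMap.range T with hW
  have hmemW : ∀ x : E, T x ∈ W := fun x => LinearMap.mem_range_self T x
  have hmem : ∀ x ∈ W, S x ∈ W := by
    intro x hx
    rw [hSapp]
    exact W.sub_mem hx (hmemW x)
  set g : W →ₗ[𝕜] W := S.restrict hmem with hg
  have hgapp : ∀ z : W, (g z : E) = S z := fun z => rfl
  constructor
  · intro hinj
    have hginj : Function.Injective g := fun a b hab => by
      apply Subtype.ext
      apply hinj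
      rw [← hgapp, ← hgapp, hab]
    have hgsurj : Function.Surjective g :=
      (LinearMap.injective_iff_surjective).mp hginj
    intro y
    obtain ⟨z, hz⟩ := hgsurj ⟨T y, hmemW y⟩
    have hz' : (z : E) - T z = T y := by
      have := congrArg Subtype.val hz
      rwa [hgapp, hSapp] at this
    refine ⟨y + z, ?_⟩
    rw [hSapp, map_add, ← hz']
    abel
  · intro hsurj
    have hgsurj : Function.Surjective g := by
      rintro ⟨w, hw⟩
      obtain ⟨x, hx⟩ := hsurj w
      rw [hSapp] at hx
      have hxW : x ∈ W := by
        have : x = w + T x := by rw [← hx]; abel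
        rw [this]; exact W.add_mem hw (hmemW x)
      refine ⟨⟨x, hxW⟩, Subtype.ext ?_⟩
      rw [hgapp, hSapp]; exact hx
    have hginj : Function.Injective g :=
      (LinearMap.injective_iff_surjective).mpr hgsurj
    rw [← LinearMap.ker_eq_bot, LinearMap.ker_eq_bot']
    intro x hx
    rw [hSapp] at hx
    have hxW : x ∈ W := by
      have : x = T x := by rw [← sub_eq_zero]; exact hx
      rw [this]; exact hmemW x
    have hz : g ⟨x, hxW⟩ = 0 := by
      apply Subtype.ext
      rw [hgapp, hSapp]; exact hx
    have := hginj (hz.trans (map_zero g).symm)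
    exact congrArg Subtype.val this

theorem stmt_17 {𝕜 E : Type*} [RCLike 𝕜] [NormedAddCommGroup E] [NormedSpace 𝕜 E]
    [CompleteSpace E] (R F : E →L[𝕜] E) (hR : Function.Bijective ⇑R)
    [FiniteDimensional 𝕜 ↥(LinearMap.range (F : E →ₗ[𝕜] E))] :
    Function.Injective ⇑(R - F) ↔ Function.Surjective ⇑(R - F) := by
  set e := LinearEquiv.ofBijective (R : E →ₗ[𝕜] E) hR with he
  set T : E →ₗ[𝕜] E := (F : E →ₗ[𝕜] E) ∘ₗ (e.symm : E →ₗ[𝕜] E) with hT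
  have hle : LinearMap.range T ≤ LinearMap.range (F : E →ₗ[𝕜] E) :=
    LinearMap.range_comp_le_range _ _
  haveI : FiniteDimensional 𝕜 (LinearMap.range T) :=
    Submodule.finiteDimensional_of_le hle
  have hcomp : ⇑(R - F) = ⇑((LinearMap.id : E →ₗ[𝕜] E) - T) ∘ ⇑R := by
    funext x
    show R x - F x = R x - T (R x)
    congr 1
    show F x = F (e.symm (R x))
    have : e.symm (R x) = x := e.symm_apply_apply x
    rw [this]
  rw [hcomp, Function.Injective.of_comp_iff' _ hR,
    Function.Surjective.of_comp_iff _ hR.surjective]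
  exact aux_fredholm T
end
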